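/- arXiv:1905.04674 — 2 statements merged into one kernel-verified Lean document; each statement's English description precedes it below -/
import Mathlib

section
/- Let u^(1) = (u1, -u2) and u^(2) = (-v1, v2) with u1, u2, v1, v2 > 0, and let e^1, e^2 be the standard basis vectors of R^2. Then the cone generated by {e^1, e^2, u^(1), u^(2)} minus the origin is convex if and only if u1·v2 - u2·v1 > 0. -/
/-- The cone generated by e¹, e², (u1,-u2), (-v1,v2) minus the origin is convex
iff u1·v2 - u2·v1 > 0. -/
theorem generated_cone_convex_iff (u1 u2 v1 v2 : ℝ)
    (hu1 : 0 < u1) (hu2 : 0 < u2) (hv1 : 0 < v1) (hv2 : 0 < v2) :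
    Convex ℝ
        ({y : ℝ × ℝ | ∃ a b c d : ℝ, 0 ≤ a ∧ 0 ≤ b ∧ 0 ≤ c ∧ 0 ≤ d ∧
            y = a • ((1 : ℝ), (0 : ℝ)) + b • ((0 : ℝ), (1 : ℝ)) +
              c • (u1, -u2) + d • (-v1, v2)} \ {0}) ↔
      u1 * v2 - u2 * v1 > 0 := by
  set S : Set (ℝ × ℝ) := {y : ℝ × ℝ | ∃ a b c d : ℝ, 0 ≤ a ∧ 0 ≤ b ∧ 0 ≤ c ∧ 0 ≤ d ∧
            y = a • ((1 : ℝ), (0 : ℝ)) + b • ((0 : ℝ), (1 : ℝ)) +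
              c • (u1, -u2) + d • (-v1, v2)} with hS
  constructor
  · intro hconv
    by_contra hD
    push_neg at hD
    have hx : ((u1, -u2) : ℝ × ℝ) ∈ S \ {0} := by
      constructor
      · exact ⟨0, 0, 1, 0, le_refl 0, le_refl 0, zero_le_one, le_refl 0, by
          simp [Prod.ext_iff]⟩
      · simp only [Set.mem_singleton_iff, Prod.ext_iff, Prod.fst_zero, Prod.snd_zero, not_and]
        intro h1
        exact absurd h1 hu1.ne'
    have hy : ((-u1, u2) : ℝ × ℝ) ∈ S \ {0} := by
      constructor
      · refine ⟨0, (u2*v1 - u1*v2)/v1, 0, u1/v1, le_refl 0, ?_, le_refl 0, ?_, ?_⟩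
        · apply div_nonneg _ hv1.le; linarith
        · positivity
        · simp only [Prod.smul_mk, Prod.mk_add_mk, Prod.ext_iff, smul_eq_mul]
          constructor
          · field_simp; ring
          · field_simp; ring
      · simp only [Set.mem_singleton_iff, Prod.ext_iff, Prod.fst_zero, Prod.snd_zero, not_and]
        intro _ h2
        exact absurd h2 hu2.ne'
    have h := hconv hx hy (by norm_num : (0:ℝ) ≤ 1/2) (by norm_num : (0:ℝ) ≤ 1/2)
      (by norm_num : (1/2 : ℝ) + 1/2 = 1)
    have hz : (1/2 : ℝ) • ((u1, -u2) : ℝ × ℝ) + (1/2 : ℝ) • ((-u1, u2) : ℝ × ℝ) = 0 := by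
      simp only [Prod.smul_mk, Prod.mk_add_mk, smul_eq_mul, Prod.ext_iff, Prod.fst_zero,
        Prod.snd_zero]
      constructor <;> ring
    rw [hz] at h
    exact h.2 rfl
  · intro hD
    have key : ∀ p ∈ S \ ({0} : Set (ℝ × ℝ)), 0 < p.1 * (u2 + v2) + p.2 * (u1 + v1) := by
      rintro p ⟨⟨a, b, c, d, ha, hb, hc, hd, hp⟩, hp0⟩
      have hℓ : p.1 * (u2 + v2) + p.2 * (u1 + v1)
          = a*(u2+v2) + b*(u1+v1) + c*(u1*v2 - u2*v1) + d*(u1*v2 - u2*v1) := by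
        rw [hp]; simp only [Prod.smul_mk, Prod.mk_add_mk, smul_eq_mul, Prod.fst_add, Prod.snd_add]
        ring
      have t1 : 0 ≤ a*(u2+v2) := mul_nonneg ha (by linarith)
      have t2 : 0 ≤ b*(u1+v1) := mul_nonneg hb (by linarith)
      have t3 : 0 ≤ c*(u1*v2 - u2*v1) := mul_nonneg hc hD.le
      have t4 : 0 ≤ d*(u1*v2 - u2*v1) := mul_nonneg hd hD.le
      by_contra hle
      push_neg at hle
      have e1 : a*(u2+v2) = 0 := le_antisymm (by rw [hℓ] at hle; linarith) t1
      have e2 : b*(u1+v1) = 0 := le_antisymm (by rw [hℓ] at hle; linarith) t2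
      have e3 : c*(u1*v2 - u2*v1) = 0 := le_antisymm (by rw [hℓ] at hle; linarith) t3
      have e4 : d*(u1*v2 - u2*v1) = 0 := le_antisymm (by rw [hℓ] at hle; linarith) t4
      have ha0 : a = 0 := by
        rcases mul_eq_zero.mp e1 with h | h
        · exact h
        · linarith
      have hb0 : b = 0 := by
        rcases mul_eq_zero.mp e2 with h | h
        · exact h
        · linarith
      have hc0 : c = 0 := by
        rcases mul_eq_zero.mp e3 with h | h
        · exact h
        · linarith
      have hd0 : d = 0 := by
        rcases mul_eq_zero.mp e4 with h | h
        · exact h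
        · linarith
      apply hp0
      rw [hp, ha0, hb0, hc0, hd0]
      simp
    intro x hx y hy s t hs ht hst
    have hℓx := key x hx
    have hℓy := key y hy
    obtain ⟨⟨a, b, c, d, ha, hb, hc, hd, hxr⟩, _⟩ := hx
    obtain ⟨⟨a', b', c', d', ha', hb', hc', hd', hyr⟩, _⟩ := hy
    constructor
    · refine ⟨s*a + t*a', s*b + t*b', s*c + t*c', s*d + t*d',
        by positivity, by positivity, by positivity, by positivity, ?_⟩
      rw [hxr, hyr]
      simp only [Prod.smul_mk, Prod.mk_add_mk, smul_eq_mul, Prod.ext_iff]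
      constructor <;> ring
    · simp only [Set.mem_singleton_iff]
      intro h0
      have hℓz : (s • x + t • y).1 * (u2 + v2) + (s • x + t • y).2 * (u1 + v1)
          = s * (x.1 * (u2 + v2) + x.2 * (u1 + v1)) + t * (y.1 * (u2 + v2) + y.2 * (u1 + v1)) := by
        simp only [Prod.fst_add, Prod.snd_add, Prod.smul_fst, Prod.smul_snd, smul_eq_mul]
        ring
      rw [h0] at hℓz
      simp only [Prod.fst_zero, Prod.snd_zero, zero_mul, add_zero] at hℓz
      rcases hs.eq_or_lt with h | h
      · have ht1 : t = 1 := by linarith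
        rw [← h, ht1] at hℓz
        simp at hℓz
        linarith
      · have h1 : 0 < s * (x.1 * (u2 + v2) + x.2 * (u1 + v1)) := mul_pos h hℓx
        have h2 : 0 ≤ t * (y.1 * (u2 + v2) + y.2 * (u1 + v1)) := mul_nonneg ht hℓy.le
        linarith
end

section
/- Let y^(l) = (w1^(l), -w2^(l)) with positive components w1^(l), w2^(l) for l ∈ {1,2,3}, and M_l = cone{e^1, e^2, y^(l)} \ {0} ⊆ R^2. Suppose W(l,s) > 0 and W(s,k) > 0 for distinct indices l, s, k in {1,2,3}, where W(a,b) = w1^(a)·w2^(b) - w2^(a)·w1^(b). Then (M_1 ∩ M_2) ∪ (M_1 ∩ M_3) ∪ (M_2 ∩ M_3) = M_s. -/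
/-- If W(l,s) > 0 and W(s,k) > 0 for distinct l, s, k then the union of
pairwise intersections of the cones M_1, M_2, M_3 equals M_s. -/
theorem majority_cone_eq_middle (w1 w2 : Fin 3 → ℝ)
    (hw1 : ∀ l, 0 < w1 l) (hw2 : ∀ l, 0 < w2 l)
    (M : Fin 3 → Set (ℝ × ℝ))
    (hM : ∀ l, M l = {y : ℝ × ℝ | ∃ a b c : ℝ, 0 ≤ a ∧ 0 ≤ b ∧ 0 ≤ c ∧
        y = a • ((1 : ℝ), (0 : ℝ)) + b • ((0 : ℝ), (1 : ℝ)) + c • (w1 l, -w2 l)} \ {0})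
    (l s k : Fin 3) (hls : l ≠ s) (hsk : s ≠ k) (hlk : l ≠ k)
    (hWls : w1 l * w2 s - w2 l * w1 s > 0)
    (hWsk : w1 s * w2 k - w2 s * w1 k > 0) :
    (M 0 ∩ M 1) ∪ (M 0 ∩ M 2) ∪ (M 1 ∩ M 2) = M s := by
  have char : ∀ (a : Fin 3) (p : ℝ × ℝ),
      p ∈ M a ↔ p ≠ 0 ∧ 0 ≤ p.1 ∧ 0 ≤ w2 a * p.1 + w1 a * p.2 := by
    intro a p
    rw [hM a]
    constructor
    · rintro ⟨⟨x, y, c, hx, hy, hc, hp⟩, hne⟩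
      have h1 : p.1 = x + c * w1 a := by rw [hp]; simp
      have h2 : p.2 = y + c * (-(w2 a)) := by rw [hp]; simp
      refine ⟨hne, ?_, ?_⟩
      · rw [h1]; have := (hw1 a).le; positivity
      · rw [h1, h2]
        have := (hw1 a).le; have := (hw2 a).le
        nlinarith [mul_nonneg (hw2 a).le hx, mul_nonneg (hw1 a).le hy]
    · rintro ⟨hne, hx, hsum⟩
      refine ⟨?_, hne⟩
      rcases le_or_gt 0 p.2 with h2 | h2
      · exact ⟨p.1, p.2, 0, hx, h2, le_refl 0, by simp⟩
      · refine ⟨(w2 a * p.1 + w1 a * p.2) / w2 a, 0, -p.2 / w2 a, ?_, le_refl 0, ?_, ?_⟩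
        · exact div_nonneg hsum (hw2 a).le
        · exact div_nonneg (by linarith) (hw2 a).le
        · have hw := (hw2 a).ne'
          apply Prod.ext <;> simp <;> field_simp <;> ring
  have sub : ∀ a b : Fin 3, 0 < w1 a * w2 b - w2 a * w1 b → M a ⊆ M b := by
    intro a b hW p hp
    rw [char a p] at hp
    rw [char b p]
    obtain ⟨hne, hx, hs⟩ := hp
    refine ⟨hne, hx, ?_⟩
    have key : 0 ≤ w1 a * (w2 b * p.1 + w1 b * p.2) := by
      nlinarith [mul_nonneg hW.le hx, mul_nonneg (hw1 b).le hs]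
    nlinarith [hw1 a]
  have h1 := sub l s hWls
  have h2 := sub s k hWsk
  ext x
  simp only [Set.mem_union, Set.mem_inter_iff]
  have H1 : x ∈ M l → x ∈ M s := fun h => h1 h
  have H2 : x ∈ M s → x ∈ M k := fun h => h2 h
  fin_cases l <;> fin_cases s <;> fin_cases k <;>
    first
      | exact absurd rfl hls
      | exact absurd rfl hsk
      | exact absurd rfl hlk
      | tauto
end
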